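/- Fix transitions ξ_n = (X_n, A_n, X'_n) for n = 1,…,N and a probability vector z ∈ Δ_N, and define S(θ,z) = Σ_{n=1}^N z(n)·(Δ̂_θ(ξ_n) − (1/η)·log(N·z(n))) + (1−γ)·Σ_x ν₀(x)·V_θ(x). Then S(·,z) is differentiable in θ and its gradient is ∇_θ S(θ,z) = Σ_{n=1}^N z(n)·(γ·Σ_a π_θ(a|X'_n)·φ(X'_n,a) − φ(X_n,A_n)) + (1−γ)·Σ_{x,a} ν₀(x)·π_θ(a|x)·φ(x,a), where π_θ(a|x) = π₀(a|x)·e^{α·(Q_θ(x,a) − V_θ(x))}. In particular, if an index I is drawn from z, actions A' ∼ π_θ(·|X'_I) and Ā ∼ π_θ(·|X̄) with X̄ ∼ ν₀, then γ·φ(X'_I,A') − φ(X_I,A_I) + (1−γ)·φ(X̄,Ā) is an unbiased estimate of ∇_θ S(θ,z). -/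

import Mathlib

section Helpers

variable {F : Type*} [NormedAddCommGroup F] [InnerProductSpace ℝ F] [CompleteSpace F]

open InnerProductSpace

lemma ipTD_smul (c : ℝ) (v : F) : toDual ℝ F (c • v) = c • toDual ℝ F v := by
  ext u; simp [real_inner_smul_left]

lemma hga_inner (v x : F) : HasGradientAt (fun u : F => (inner ℝ u v : ℝ)) v x := by
  rw [hasGradientAt_iff_hasFDerivAt]
  have h := (innerSL ℝ v).hasFDerivAt (x := x)
  apply h.congr_fderiv ?_ |>.congr_of_eventuallyEq ?_
  · ext u; simp [InnerProductSpace.toDual_apply_apply]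
  · filter_upwards with u; simp [real_inner_comm]

lemma hga_add {f g : F → ℝ} {vf vg x : F} (hf : HasGradientAt f vf x)
    (hg : HasGradientAt g vg x) : HasGradientAt (fun u => f u + g u) (vf + vg) x := by
  rw [hasGradientAt_iff_hasFDerivAt] at *
  simpa using hf.fun_add hg

lemma hga_const_mul {f : F → ℝ} {vf x : F} (c : ℝ) (hf : HasGradientAt f vf x) :
    HasGradientAt (fun u => c * f u) (c • vf) x := by
  rw [hasGradientAt_iff_hasFDerivAt] at *
  rw [ipTD_smul]
  exact hf.const_smul c

lemma hga_sum {ι : Type*} (s : Finset ι) {f : ι → F → ℝ} {v : ι → F} {x : F}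
    (hf : ∀ i ∈ s, HasGradientAt (f i) (v i) x) :
    HasGradientAt (fun u => ∑ i ∈ s, f i u) (∑ i ∈ s, v i) x := by
  rw [hasGradientAt_iff_hasFDerivAt]
  rw [map_sum]
  exact HasFDerivAt.fun_sum (fun i hi => hasGradientAt_iff_hasFDerivAt.1 (hf i hi))

lemma hga_log {f : F → ℝ} {v x : F} (hf : HasGradientAt f v x) (hpos : 0 < f x) :
    HasGradientAt (fun u => Real.log (f u)) ((f x)⁻¹ • v) x := by
  rw [hasGradientAt_iff_hasFDerivAt] at *
  rw [ipTD_smul]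
  exact (Real.hasDerivAt_log hpos.ne').comp_hasFDerivAt x hf

lemma hga_exp {f : F → ℝ} {v x : F} (hf : HasGradientAt f v x) :
    HasGradientAt (fun u => Real.exp (f u)) (Real.exp (f x) • v) x := by
  rw [hasGradientAt_iff_hasFDerivAt] at *
  rw [ipTD_smul]
  exact (Real.hasDerivAt_exp (f x)).comp_hasFDerivAt x hf

lemma hga_sub_const {f : F → ℝ} {v x : F} (c : ℝ) (hf : HasGradientAt f v x) :
    HasGradientAt (fun u => f u - c) v x := by
  rw [hasGradientAt_iff_hasFDerivAt] at *
  simpa using hf.sub_const c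

lemma hga_const_add {f : F → ℝ} {v x : F} (c : ℝ) (hf : HasGradientAt f v x) :
    HasGradientAt (fun u => c + f u) v x := by
  rw [hasGradientAt_iff_hasFDerivAt] at *
  simpa using hf.const_add c

lemma hga_sub {f g : F → ℝ} {vf vg x : F} (hf : HasGradientAt f vf x)
    (hg : HasGradientAt g vg x) : HasGradientAt (fun u => f u - g u) (vf - vg) x := by
  rw [hasGradientAt_iff_hasFDerivAt] at *
  simpa using hf.fun_sub hg

end Helpers


/-- For fixed transitions ξ_n = (X_n, A_n, X'_n) and z ∈ Δ_N, the map
θ ↦ S(θ,z) is differentiable with gradient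
∇_θ S(θ,z) = Σ_n z(n)·(γ·Σ_a π_θ(a|X'_n)·φ(X'_n,a) − φ(X_n,A_n))
            + (1−γ)·Σ_{x,a} ν₀(x)·π_θ(a|x)·φ(x,a),
and the single-sample estimator γ·φ(X'_I,A') − φ(X_I,A_I) + (1−γ)·φ(X̄,Ā) with
I ∼ z, A' ∼ π_θ(·|X'_I), X̄ ∼ ν₀, Ā ∼ π_θ(·|X̄) is unbiased: its expectation
(the corresponding finite weighted sum) equals this gradient. -/
theorem stmt3 {X A : Type*} [Fintype X] [Fintype A] [Nonempty X] [Nonempty A]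
    {m : ℕ} (r : X → A → ℝ) (γ : ℝ) (ν₀ : X → ℝ)
    (φ : X → A → EuclideanSpace ℝ (Fin m)) (α η : ℝ) (π₀ : X → A → ℝ)
    (hr : ∀ x a, 0 ≤ r x a ∧ r x a ≤ 1)
    (hγ0 : 0 < γ) (hγ1 : γ < 1)
    (hν₀0 : ∀ x, 0 ≤ ν₀ x) (hν₀1 : ∑ x, ν₀ x = 1)
    (hα : 0 < α) (hη : 0 < η)
    (hπ₀pos : ∀ x a, 0 < π₀ x a) (hπ₀1 : ∀ x, ∑ a, π₀ x a = 1)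
    (N : ℕ) (hN : 1 ≤ N) (ξ : Fin N → X × A × X)
    (z : Fin N → ℝ) (hz0 : ∀ n, 0 ≤ z n) (hz1 : ∑ n, z n = 1)
    (Q : EuclideanSpace ℝ (Fin m) → X → A → ℝ)
    (hQ : ∀ θ x a, Q θ x a = inner ℝ θ (φ x a))
    (V : EuclideanSpace ℝ (Fin m) → X → ℝ)
    (hV : ∀ θ x, V θ x = (1 / α) * Real.log (∑ a, π₀ x a * Real.exp (α * Q θ x a)))
    (Δhat : EuclideanSpace ℝ (Fin m) → X × A × X → ℝ)
    (hΔhat : ∀ θ x a x', Δhat θ (x, a, x') = r x a + γ * V θ x' - Q θ x a)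
    (S : EuclideanSpace ℝ (Fin m) → ℝ)
    (hS : ∀ θ, S θ =
      (∑ n, z n * (Δhat θ (ξ n) - (1 / η) * Real.log (N * z n)))
        + (1 - γ) * ∑ x, ν₀ x * V θ x)
    (θ : EuclideanSpace ℝ (Fin m))
    (πθ : X → A → ℝ)
    (hπθ : ∀ x a, πθ x a = π₀ x a * Real.exp (α * (Q θ x a - V θ x)))
    (g : EuclideanSpace ℝ (Fin m))
    (hg : g = (∑ n, z n •
        (γ • (∑ a, πθ (ξ n).2.2 a • φ (ξ n).2.2 a) - φ (ξ n).1 (ξ n).2.1))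
      + (1 - γ) • ∑ x, ∑ a, (ν₀ x * πθ x a) • φ x a) :
    HasGradientAt S g θ ∧
      (∑ n, ∑ a', ∑ x, ∑ a, (z n * πθ (ξ n).2.2 a' * (ν₀ x * πθ x a)) •
          (γ • φ (ξ n).2.2 a' - φ (ξ n).1 (ξ n).2.1 + (1 - γ) • φ x a)) = g := by
  classical
  -- positivity of the partition function
  have hspos : ∀ x, 0 < ∑ a, π₀ x a * Real.exp (α * Q θ x a) := fun x =>
    Finset.sum_pos (fun a _ => mul_pos (hπ₀pos x a) (Real.exp_pos _)) Finset.univ_nonempty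
  -- exp(α V) equals the partition function
  have hexpV : ∀ x, Real.exp (α * V θ x) = ∑ a, π₀ x a * Real.exp (α * Q θ x a) := by
    intro x
    rw [hV]
    rw [show α * (1 / α * Real.log (∑ a, π₀ x a * Real.exp (α * Q θ x a)))
      = Real.log (∑ a, π₀ x a * Real.exp (α * Q θ x a)) by field_simp]
    exact Real.exp_log (hspos x)
  -- πθ as a quotient
  have hπθ' : ∀ x a, πθ x a
      = π₀ x a * Real.exp (α * Q θ x a) / (∑ b, π₀ x b * Real.exp (α * Q θ x b)) := by
    intro x a
    rw [hπθ, mul_sub, Real.exp_sub, ← hexpV x, mul_div_assoc]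
  -- πθ sums to 1
  have hπθ1 : ∀ x, ∑ a, πθ x a = 1 := by
    intro x
    simp only [hπθ']
    rw [← Finset.sum_div, div_self (hspos x).ne']
  -- gradient of V
  have hgradV : ∀ x, HasGradientAt (fun ϑ => V ϑ x) (∑ a, πθ x a • φ x a) θ := by
    intro x
    have hVfun : (fun ϑ : EuclideanSpace ℝ (Fin m) => V ϑ x)
        = fun ϑ => (1 / α) * Real.log (∑ a, π₀ x a * Real.exp (α * inner ℝ ϑ (φ x a))) := by
      funext ϑ
      rw [hV]
      simp only [hQ]
    rw [hVfun]
    have hbase : HasGradientAt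
        (fun ϑ : EuclideanSpace ℝ (Fin m) => ∑ a, π₀ x a * Real.exp (α * inner ℝ ϑ (φ x a)))
        (∑ a, π₀ x a • Real.exp (α * (inner ℝ θ (φ x a) : ℝ)) • α • φ x a) θ := by
      apply hga_sum
      intro a _
      exact hga_const_mul _ (hga_exp (hga_const_mul α (hga_inner (φ x a) θ)))
    have hposs : 0 < ∑ a, π₀ x a * Real.exp (α * (inner ℝ θ (φ x a) : ℝ)) := by
      have := hspos x; simp only [hQ] at this; exact this
    have hlog := hga_log hbase hposs
    have hfin := hga_const_mul (1 / α) hlog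
    have hEq : (∑ a, πθ x a • φ x a)
        = (1 / α) • (∑ a, π₀ x a * Real.exp (α * (inner ℝ θ (φ x a) : ℝ)))⁻¹ •
          ∑ a, π₀ x a • Real.exp (α * (inner ℝ θ (φ x a) : ℝ)) • α • φ x a := by
      rw [Finset.smul_sum, Finset.smul_sum]
      refine Finset.sum_congr rfl fun a _ => ?_
      rw [smul_smul, smul_smul, smul_smul, smul_smul]
      congr 1
      rw [hπθ' x a]
      simp only [← hQ]
      field_simp [hα.ne']
    rw [hEq]
    exact hfin
  constructor
  · -- gradient of S
    have hSfun : S = fun ϑ =>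
        (∑ n, z n * (r (ξ n).1 (ξ n).2.1 + γ * V ϑ (ξ n).2.2 - Q ϑ (ξ n).1 (ξ n).2.1
          - (1 / η) * Real.log (N * z n)))
        + (1 - γ) * ∑ x, ν₀ x * V ϑ x := by
      funext ϑ
      rw [hS]
      congr 1
      refine Finset.sum_congr rfl fun n _ => ?_
      rw [show ξ n = ((ξ n).1, (ξ n).2.1, (ξ n).2.2) from rfl, hΔhat]
    rw [hSfun, hg]
    apply hga_add
    · apply hga_sum
      intro n _
      refine hga_const_mul (z n) (hga_sub_const _ ?_)
      have h1 : HasGradientAt (fun ϑ : EuclideanSpace ℝ (Fin m) => r (ξ n).1 (ξ n).2.1 + γ * V ϑ (ξ n).2.2)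
          (γ • ∑ a, πθ (ξ n).2.2 a • φ (ξ n).2.2 a) θ :=
        hga_const_add _ (hga_const_mul γ (hgradV (ξ n).2.2))
      have h2 : HasGradientAt (fun ϑ : EuclideanSpace ℝ (Fin m) => Q ϑ (ξ n).1 (ξ n).2.1)
          (φ (ξ n).1 (ξ n).2.1) θ := by
        have := hga_inner (φ (ξ n).1 (ξ n).2.1) θ
        simp only [← hQ] at this
        exact this
      exact hga_sub h1 h2
    · have hEq2 : (∑ x, ∑ a, (ν₀ x * πθ x a) • φ x a)
          = ∑ x, ν₀ x • ∑ a, πθ x a • φ x a := by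
        refine Finset.sum_congr rfl fun x _ => ?_
        rw [Finset.smul_sum]
        exact Finset.sum_congr rfl fun a _ => by rw [smul_smul]
      rw [hEq2]
      exact hga_const_mul _ (hga_sum _ fun x _ => hga_const_mul _ (hgradV x))
  · -- unbiasedness
    rw [hg]
    have step1 : (∑ n, ∑ a', ∑ x, ∑ a, (z n * πθ (ξ n).2.2 a' * (ν₀ x * πθ x a)) •
          (γ • φ (ξ n).2.2 a' - φ (ξ n).1 (ξ n).2.1 + (1 - γ) • φ x a))
        = ∑ n, z n • ∑ a', πθ (ξ n).2.2 a' • ∑ x, ν₀ x • ∑ a, πθ x a •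
          (γ • φ (ξ n).2.2 a' - φ (ξ n).1 (ξ n).2.1 + (1 - γ) • φ x a) := by
      simp only [Finset.smul_sum, smul_smul]
      refine Finset.sum_congr rfl fun n _ => Finset.sum_congr rfl fun a' _ =>
        Finset.sum_congr rfl fun x _ => Finset.sum_congr rfl fun a _ => ?_
      congr 1
      ring
    rw [step1]
    have inner1 : ∀ (w : EuclideanSpace ℝ (Fin m)) x,
        (∑ a, πθ x a • (w + (1 - γ) • φ x a))
          = w + (1 - γ) • ∑ a, πθ x a • φ x a := by
      intro w x
      simp only [smul_add]
      rw [Finset.sum_add_distrib, ← Finset.sum_smul, hπθ1 x, one_smul, Finset.smul_sum]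
      congr 1
      exact Finset.sum_congr rfl fun a _ => smul_comm _ _ _
    have inner2 : ∀ (w : EuclideanSpace ℝ (Fin m)),
        (∑ x, ν₀ x • (w + (1 - γ) • ∑ a, πθ x a • φ x a))
          = w + (1 - γ) • ∑ x, ∑ a, (ν₀ x * πθ x a) • φ x a := by
      intro w
      simp only [smul_add]
      rw [Finset.sum_add_distrib, ← Finset.sum_smul, hν₀1, one_smul]
      congr 1
      rw [Finset.smul_sum]
      refine Finset.sum_congr rfl fun x _ => ?_
      rw [smul_comm, Finset.smul_sum]
      congr 1
      refine Finset.sum_congr rfl fun a _ => ?_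
      rw [smul_smul]
    have inner3 : ∀ n, (∑ a', πθ (ξ n).2.2 a' •
        ((γ • φ (ξ n).2.2 a' - φ (ξ n).1 (ξ n).2.1)
          + (1 - γ) • ∑ x, ∑ a, (ν₀ x * πθ x a) • φ x a))
        = (γ • (∑ a', πθ (ξ n).2.2 a' • φ (ξ n).2.2 a') - φ (ξ n).1 (ξ n).2.1)
          + (1 - γ) • ∑ x, ∑ a, (ν₀ x * πθ x a) • φ x a := by
      intro n
      have e1 : (∑ a', πθ (ξ n).2.2 a' • γ • φ (ξ n).2.2 a')
          = γ • ∑ a', πθ (ξ n).2.2 a' • φ (ξ n).2.2 a' := by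
        rw [Finset.smul_sum]
        exact Finset.sum_congr rfl fun a' _ => smul_comm _ _ _
      simp only [smul_add, smul_sub]
      rw [Finset.sum_add_distrib, Finset.sum_sub_distrib, e1, ← Finset.sum_smul, hπθ1,
        one_smul, ← Finset.sum_smul, hπθ1, one_smul]
    calc (∑ n, z n • ∑ a', πθ (ξ n).2.2 a' • ∑ x, ν₀ x • ∑ a, πθ x a •
          (γ • φ (ξ n).2.2 a' - φ (ξ n).1 (ξ n).2.1 + (1 - γ) • φ x a))
        = ∑ n, z n • ((γ • (∑ a', πθ (ξ n).2.2 a' • φ (ξ n).2.2 a') - φ (ξ n).1 (ξ n).2.1)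
            + (1 - γ) • ∑ x, ∑ a, (ν₀ x * πθ x a) • φ x a) := by
          refine Finset.sum_congr rfl fun n _ => ?_
          congr 1
          rw [show (∑ a', πθ (ξ n).2.2 a' • ∑ x, ν₀ x • ∑ a, πθ x a •
              (γ • φ (ξ n).2.2 a' - φ (ξ n).1 (ξ n).2.1 + (1 - γ) • φ x a))
            = ∑ a', πθ (ξ n).2.2 a' •
              ((γ • φ (ξ n).2.2 a' - φ (ξ n).1 (ξ n).2.1)
                + (1 - γ) • ∑ x, ∑ a, (ν₀ x * πθ x a) • φ x a) from
            Finset.sum_congr rfl fun a' _ => by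
              rw [show (∑ x, ν₀ x • ∑ a, πθ x a •
                  (γ • φ (ξ n).2.2 a' - φ (ξ n).1 (ξ n).2.1 + (1 - γ) • φ x a))
                = ∑ x, ν₀ x • ((γ • φ (ξ n).2.2 a' - φ (ξ n).1 (ξ n).2.1)
                  + (1 - γ) • ∑ a, πθ x a • φ x a) from
                Finset.sum_congr rfl fun x _ => by rw [inner1], inner2]]
          rw [inner3]
      _ = (∑ n, z n • (γ • (∑ a', πθ (ξ n).2.2 a' • φ (ξ n).2.2 a') - φ (ξ n).1 (ξ n).2.1))
            + (1 - γ) • ∑ x, ∑ a, (ν₀ x * πθ x a) • φ x a := by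
          simp only [smul_add]
          rw [Finset.sum_add_distrib, ← Finset.sum_smul, hz1, one_smul]
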